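/- Every graph G of order n ≥ 2 satisfies st_D(G) ≤ n − ω(G) + 1, where ω(G) is the clique number of G. -/
import Mathlib


open SimpleGraph

/-- The distinguishing number of a graph: the least `d` such that there is a vertex
labeling with `d` labels preserved only by the trivial automorphism. -/
noncomputable def distNum {V : Type*} (G : SimpleGraph V) : ℕ :=
  sInf {d : ℕ | ∃ f : V → Fin d, ∀ φ : G ≃g G, (∀ x, f (φ x) = f x) → ∀ x, φ x = x}

/-- The distinguishing stability of a graph: the minimum cardinality of a proper subset
`S` of the vertex set whose removal changes the distinguishing number. -/
noncomputable def stD {V : Type*} (G : SimpleGraph V) : ℕ :=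
  sInf {k : ℕ | ∃ S : Set V, S ≠ Set.univ ∧ S.ncard = k ∧
    distNum (G.induce Sᶜ) ≠ distNum G}

/-- The distinguishing bondage number of a graph: the minimum cardinality of a set
of edges whose removal changes the distinguishing number. -/
noncomputable def bD {V : Type*} (G : SimpleGraph V) : ℕ :=
  sInf {k : ℕ | ∃ F : Set (Sym2 V), F ⊆ G.edgeSet ∧ F.ncard = k ∧
    distNum (G.deleteEdges F) ≠ distNum G}

lemma distNum_mem_set {W : Type*} [Fintype W] (H : SimpleGraph W) :
    Fintype.card W ∈ {d : ℕ | ∃ f : W → Fin d,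
      ∀ φ : H ≃g H, (∀ x, f (φ x) = f x) → ∀ x, φ x = x} := by
  refine ⟨Fintype.equivFin W, fun φ hφ x => ?_⟩
  exact (Fintype.equivFin W).injective (hφ x)

lemma distNum_le_card {W : Type*} [Fintype W] (H : SimpleGraph W) :
    distNum H ≤ Fintype.card W :=
  Nat.sInf_le (distNum_mem_set H)

lemma distNum_top {W : Type*} [Fintype W] (H : SimpleGraph W)
    (hH : ∀ u v : W, H.Adj u v ↔ u ≠ v) : distNum H = Fintype.card W := by
  classical
  refine le_antisymm (distNum_le_card H) (le_csInf ⟨_, distNum_mem_set H⟩ ?_)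
  rintro d ⟨f, hf⟩
  by_contra hlt
  push_neg at hlt
  obtain ⟨u, v, hne, heq⟩ := Fintype.exists_ne_map_eq_of_card_lt f (by simpa using hlt)
  let φ : H ≃g H := ⟨Equiv.swap u v, by
    intro x y
    simp only [hH]
    exact (Equiv.swap u v).injective.ne_iff⟩
  have hpres : ∀ x, f (φ x) = f x := by
    intro x
    rcases eq_or_ne x u with rfl | hxu
    · simpa [φ, Equiv.swap_apply_left] using heq.symm
    rcases eq_or_ne x v with rfl | hxv
    · simpa [φ, Equiv.swap_apply_right] using heq
    · simp [φ, Equiv.swap_apply_of_ne_of_ne hxu hxv]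
  have hu := hf φ hpres u
  simp only [φ, RelIso.coe_fn_mk, Equiv.swap_apply_left] at hu
  exact hne hu.symm

lemma distNum_induce_clique {V : Type*} [Fintype V] (G : SimpleGraph V) (s : Finset V)
    (hs : G.IsClique ↑s) : distNum (G.induce ((↑s : Set V)ᶜ)ᶜ) = s.card := by
  classical
  rw [distNum_top]
  · rw [Fintype.card_congr (Equiv.setCongr (compl_compl (↑s : Set V)))]
    exact Fintype.card_coe s
  · rintro ⟨u, hu⟩ ⟨v, hv⟩
    simp only [compl_compl, Finset.mem_coe] at hu hv
    constructor
    · intro hadj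
      have : G.Adj u v := hadj
      exact Subtype.coe_ne_coe.mp (G.ne_of_adj this)
    · intro hne
      have hne' : u ≠ v := fun h => hne (Subtype.ext h)
      exact hs (by exact_mod_cast hu) (by exact_mod_cast hv) hne'

theorem distNum_ne_one_of_edgeless {W : Type*} [Fintype W] (H : SimpleGraph W)
    (hE : ∀ u v, ¬ H.Adj u v) (h2 : 2 ≤ Fintype.card W) : distNum H ≠ 1 := by
  classical
  intro h1
  have hmem := Nat.sInf_mem ⟨_, distNum_mem_set H⟩
  rw [show sInf _ = distNum H from rfl] at hmem
  obtain ⟨f, hf⟩ := hmem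
  obtain ⟨u, v, hne⟩ := Fintype.exists_pair_of_one_lt_card h2
  let φ : H ≃g H := ⟨Equiv.swap u v, by
    intro x y
    exact iff_of_false (hE _ _) (hE _ _)⟩
  have hpres : ∀ x, f (φ x) = f x := by
    intro x
    have : Subsingleton (Fin (distNum H)) := by rw [h1]; infer_instance
    exact Subsingleton.elim _ _
  have hu := hf φ hpres u
  simp only [φ, RelIso.coe_fn_mk, Equiv.swap_apply_left] at hu
  exact hne hu.symm

/-- $st_D(G) \le n - \omega(G) + 1$. -/
theorem stD_le_card_sub_cliqueNum {V : Type*} [Fintype V] (G : SimpleGraph V)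
    (h : 2 ≤ Fintype.card V) :
    stD G ≤ Fintype.card V - G.cliqueNum + 1 := by
  classical
  obtain ⟨s, hs⟩ := G.exists_isNClique_cliqueNum
  have hcard : s.card = G.cliqueNum := hs.card_eq
  have hsc : G.IsClique ↑s := hs.isClique
  have hω_le : G.cliqueNum ≤ Fintype.card V := by
    rw [← hcard, ← Finset.card_univ]
    exact Finset.card_le_card (Finset.subset_univ s)
  have hω_pos : 1 ≤ G.cliqueNum := by
    have hpos : 0 < Fintype.card V := by omega
    obtain ⟨v⟩ := Fintype.card_pos_iff.mp hpos
    have hone : ({v} : Finset V).card ≤ G.cliqueNum :=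
      IsClique.card_le_cliqueNum (tc := by simp)
    simpa using hone
  have hncard : ∀ t : Finset V, ((↑t : Set V)ᶜ).ncard = Fintype.card V - t.card := by
    intro t
    rw [Set.ncard_eq_toFinset_card', Set.toFinset_compl, Finset.toFinset_coe,
      Finset.card_compl]
  by_cases hed : distNum G = G.cliqueNum
  · rcases Nat.lt_or_ge G.cliqueNum 2 with hω2 | hω2
    · exfalso
      have hE : ∀ u v, ¬ G.Adj u v := by
        intro u v huv
        have h2c : ({u, v} : Finset V).card ≤ G.cliqueNum :=
          IsClique.card_le_cliqueNum (tc := by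
            rw [Finset.coe_pair]
            exact SimpleGraph.isClique_pair.mpr fun _ => huv)
        rw [Finset.card_pair (G.ne_of_adj huv)] at h2c
        omega
      exact distNum_ne_one_of_edgeless G hE h (by omega)
    · obtain ⟨v, hv⟩ : s.Nonempty := Finset.card_pos.mp (by omega)
      have htcard : (s.erase v).card = G.cliqueNum - 1 := by
        rw [Finset.card_erase_of_mem hv, hcard]
      have htc : G.IsClique ↑(s.erase v) :=
        hsc.subset (by exact_mod_cast Finset.erase_subset v s)
      refine Nat.sInf_le ⟨(↑(s.erase v) : Set V)ᶜ, ?_, ?_, ?_⟩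
      · intro hcontra
        have h0 := congrArg compl hcontra
        rw [compl_compl, Set.compl_univ] at h0
        have : (s.erase v) = ∅ := by exact_mod_cast h0
        rw [this] at htcard
        simp at htcard
        omega
      · rw [hncard, htcard]
        omega
      · rw [distNum_induce_clique G (s.erase v) htc, htcard, hed]
        omega
  · have hle : stD G ≤ Fintype.card V - G.cliqueNum := by
      refine Nat.sInf_le ⟨(↑s : Set V)ᶜ, ?_, ?_, ?_⟩
      · intro hcontra
        have h0 := congrArg compl hcontra
        rw [compl_compl, Set.compl_univ] at h0
        have : s = ∅ := by exact_mod_cast h0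
        rw [this] at hcard
        simp at hcard
        omega
      · rw [hncard, hcard]
      · rw [distNum_induce_clique G s hsc, hcard]
        exact fun hh => hed hh.symm
    omega
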